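/- Let B be the set of nonempty finite subsets of positive integers, partially ordered by D ≪ D' iff D = D' or every element of D is smaller than every element of D'. If π and π' are words over B that are equivalent in the partially commutative monoid L(B, ≪), then for any piecewise decreasing and connected dashed pattern p, the number of occurrences of p in π equals the number of occurrences of p in π'. -/

import Mathlib

namespace PCW

/-- `sb u v` : every letter of `u` is (strictly) below every letter of `v`.
Thus `u ≪ v` iff `u = v ∨ sb u v`. -/
def sb (u v : List ℕ) : Prop := ∀ x ∈ u, ∀ y ∈ v, x < y

/-- A block of a word over `B`: a nonempty strictly decreasing sequence of
positive integers. -/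
def IsBlock (D : List ℕ) : Prop := D ≠ [] ∧ D.Pairwise (· > ·) ∧ ∀ x ∈ D, 0 < x

/-- Adjacency in the free monoid over `(B, ≪)` : swap of two adjacent,
distinct and comparable blocks. -/
inductive Adj : List (List ℕ) → List (List ℕ) → Prop
  | swap (u v : List (List ℕ)) (a b : List ℕ) (hne : a ≠ b)
      (hcomp : sb a b ∨ sb b a) :
      Adj (u ++ a :: b :: v) (u ++ b :: a :: v)

/-- Equivalence in the partially commutative monoid `L(B, ≪)`. -/
def Equiv (π π' : List (List ℕ)) : Prop := Relation.ReflTransGen Adj π π'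

/-- Two lists of naturals are order isomorphic: same length and `<`
holds in corresponding positions simultaneously. -/
def OrdIso (u v : List ℕ) : Prop :=
  ∃ h : u.length = v.length, ∀ (a b : ℕ) (ha : a < u.length) (hb : b < u.length),
    (u[a]'ha < u[b]'hb ↔ v[a]'(by omega) < v[b]'(by omega))

/-- Occurrences of a (piecewise decreasing) dashed pattern `p`, given as its
list of blocks, in a word `π` over `B`: a strictly increasing choice of blocks
of `π` together with starting positions of contiguous subsequences, whose
concatenation is order isomorphic to the concatenation of the blocks of `p`. -/
def blockOccs (p π : List (List ℕ)) :
    Set ((Fin p.length → Fin π.length) × (Fin p.length → ℕ)) :=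
  {o | StrictMono o.1
    ∧ (∀ i : Fin p.length, o.2 i + (p.get i).length ≤ (π.get (o.1 i)).length)
    ∧ OrdIso
        (List.ofFn fun i : Fin p.length =>
          ((π.get (o.1 i)).drop (o.2 i)).take (p.get i).length).flatten
        p.flatten}

/-- The number of occurrences of the pattern `p` in the word `π` over `B`. -/
noncomputable def occ (p π : List (List ℕ)) : ℕ := (blockOccs p π).ncard

end PCW

section Proofs


lemma flat_len (L : List (List ℕ)) (i q : ℕ) (hi : i < L.length) (hq : q < (L[i]'hi).length) :
    (L.take i).flatten.length + q < L.flatten.length := by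
  induction L generalizing i with
  | nil => simp at hi
  | cons h t ih =>
    cases i with
    | zero =>
      simp only [List.take_zero, List.flatten_nil, List.length_nil, List.flatten_cons,
        List.length_append, List.getElem_cons_zero] at *
      omega
    | succ n =>
      have hi' : n < t.length := by simp only [List.length_cons] at hi; omega
      simp only [List.take_succ_cons, List.flatten_cons, List.length_append,
        List.getElem_cons_succ] at *
      have := ih n hi' hq
      omega

lemma flat_get (L : List (List ℕ)) (i q : ℕ) (hi : i < L.length) (hq : q < (L[i]'hi).length) :
    L.flatten[(L.take i).flatten.length + q]'(flat_len L i q hi hq) = (L[i]'hi)[q]'hq := by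
  induction L generalizing i with
  | nil => simp at hi
  | cons h t ih =>
    cases i with
    | zero =>
      simp only [List.take_zero, List.flatten_nil, List.length_nil, Nat.zero_add,
        List.flatten_cons, List.getElem_cons_zero] at *
      rw [List.getElem_append_left (show q < h.length by simpa using hq)]
    | succ n =>
      have hi' : n < t.length := by simp only [List.length_cons] at hi; omega
      simp only [List.take_succ_cons, List.flatten_cons, List.length_append,
        List.getElem_cons_succ, Nat.add_assoc] at *
      rw [List.getElem_append_right (by omega)]
      simpa using ih n hi' hq

lemma take_flatten_len (L M : List (List ℕ)) (hlen : L.length = M.length)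
    (h : ∀ (j : ℕ) (hj : j < L.length), (L[j]'hj).length = (M[j]'(hlen ▸ hj)).length) (i : ℕ) :
    (L.take i).flatten.length = (M.take i).flatten.length := by
  rw [List.length_flatten, List.length_flatten, List.map_take, List.map_take]
  congr 1
  apply List.ext_getElem
  · simp [hlen]
  · intro j h1 h2
    simp only [List.getElem_take, List.getElem_map]
    apply h


def sw (k n : ℕ) : ℕ := if n = k then k + 1 else if n = k + 1 then k else n
lemma sw_sw (k n : ℕ) : sw k (sw k n) = n := by unfold sw; split_ifs <;> omega
lemma sw_lt {k n m : ℕ} (hk : k + 1 < m) (hn : n < m) : sw k n < m := by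
  unfold sw; split_ifs <;> omega
lemma sw_mono {k x y : ℕ} (hxy : x < y) (hne : ¬(x = k ∧ y = k + 1)) : sw k x < sw k y := by
  unfold sw; split_ifs <;> omega

lemma get_sw (u v : List (List ℕ)) (a b : List ℕ) (n : ℕ) (hn : n < (u ++ a :: b :: v).length)
    (hn' : sw u.length n < (u ++ b :: a :: v).length) :
    (u ++ b :: a :: v)[sw u.length n]'hn' = (u ++ a :: b :: v)[n]'hn := by
  have hL : n < u.length + (v.length + 2) := by simp at hn; omega
  unfold sw at *
  split_ifs at hn' ⊢ with h1 h2
  · subst h1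
    rw [List.getElem_append_right (by omega), List.getElem_append_right (by omega)]
    simp
  · subst h2
    rw [List.getElem_append_right (by omega), List.getElem_append_right (by omega)]
    simp
  · rcases Nat.lt_or_ge n u.length with h | h
    · rw [List.getElem_append_left h, List.getElem_append_left h]
    · rw [List.getElem_append_right h, List.getElem_append_right h]
      have h2 : 2 ≤ n - u.length := by omega
      rw [List.getElem_cons, List.getElem_cons,
        dif_neg (by omega : ¬ n - u.length = 0), dif_neg (by omega : ¬ n - u.length = 0),
        List.getElem_cons, List.getElem_cons,
        dif_neg (by omega : ¬ n - u.length - 1 = 0), dif_neg (by omega : ¬ n - u.length - 1 = 0)]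

lemma not_both (p π : List (List ℕ)) (hpdec : ∀ τ ∈ p, PCW.IsBlock τ)
    (hpconn : p.Chain' fun a b => a = b ∨ (¬ PCW.sb a b ∧ ¬ PCW.sb b a))
    (o : (Fin p.length → Fin π.length) × (Fin p.length → ℕ))
    (ho : o ∈ PCW.blockOccs p π) (k : ℕ) (hk : k + 1 < π.length)
    (hcomp : PCW.sb (π[k]'(by omega)) (π[k+1]'hk) ∨ PCW.sb (π[k+1]'hk) (π[k]'(by omega)))
    (i j : Fin p.length) (hik : (o.1 i : ℕ) = k) (hjk : (o.1 j : ℕ) = k + 1) : False := by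
  obtain ⟨hmono, hlen, hiso⟩ := ho
  simp only [List.get_eq_getElem] at hlen hiso
  -- i < j
  have hij : i < j := hmono.lt_iff_lt.mp (by rw [Fin.lt_def, hik, hjk]; omega)
  -- j = i + 1
  have hji : (j : ℕ) = (i : ℕ) + 1 := by
    by_contra hne
    have hlt : (i : ℕ) + 1 < (j : ℕ) := by rw [Fin.lt_def] at hij; omega
    have hm : (i : ℕ) + 1 < p.length := lt_trans hlt j.isLt
    have h1 : ((o.1 i : ℕ) : ℕ) < ((o.1 ⟨(i : ℕ) + 1, hm⟩ : Fin π.length) : ℕ) :=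
      hmono (show i < ⟨(i : ℕ) + 1, hm⟩ from Nat.lt_succ_self _)
    have h2 : ((o.1 ⟨(i : ℕ) + 1, hm⟩ : Fin π.length) : ℕ) < ((o.1 j : ℕ) : ℕ) :=
      hmono (show (⟨(i : ℕ) + 1, hm⟩ : Fin p.length) < j from hlt)
    omega
  set W : List (List ℕ) :=
    List.ofFn (fun i : Fin p.length =>
      ((π[(o.1 i : ℕ)]'(o.1 i).isLt).drop (o.2 i)).take (p[(i : ℕ)]'i.isLt).length) with hWdef
  obtain ⟨hL, hcmp⟩ := hiso
  have hWlen : W.length = p.length := List.length_ofFn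
  have hWget : ∀ t : Fin p.length, W[(t : ℕ)]'(by rw [hWlen]; exact t.isLt)
      = ((π[(o.1 t : ℕ)]'(o.1 t).isLt).drop (o.2 t)).take (p[(t : ℕ)]'t.isLt).length := by
    intro t
    simp only [hWdef, List.getElem_ofFn, Fin.eta]
  have hWl : ∀ (s : ℕ) (hs : s < W.length),
      (W[s]'hs).length = (p[s]'(hWlen ▸ hs)).length := by
    intro s hs
    have hs' : s < p.length := hWlen ▸ hs
    have h2 := hlen ⟨s, hs'⟩
    have h1 := hWget ⟨s, hs'⟩
    simp only [Fin.val_mk] at h1 h2 ⊢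
    rw [h1]
    simp only [List.length_take, List.length_drop]
    omega
  have hpre : ∀ t : ℕ, (W.take t).flatten.length = (p.take t).flatten.length :=
    take_flatten_len W p hWlen hWl
  -- bound helpers
  have hbd : ∀ (t : Fin p.length) (q : ℕ), q < (p[(t : ℕ)]'t.isLt).length →
      o.2 t + q < (π[(o.1 t : ℕ)]'(o.1 t).isLt).length := by
    intro t q hq; have := hlen t; omega
  have hfl : ∀ (t : Fin p.length) (q : ℕ) (hq : q < (p[(t : ℕ)]'t.isLt).length),
      (W.take (t : ℕ)).flatten.length + q < W.flatten.length := by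
    intro t q hq
    exact flat_len W t q (by rw [hWlen]; exact t.isLt) (by rw [hWl]; exact hq)
  have hWval : ∀ (t : Fin p.length) (q : ℕ) (hq : q < (p[(t : ℕ)]'t.isLt).length),
      W.flatten[(W.take (t : ℕ)).flatten.length + q]'(hfl t q hq)
        = (π[(o.1 t : ℕ)]'(o.1 t).isLt)[o.2 t + q]'(hbd t q hq) := by
    intro t q hq
    rw [flat_get W t q (by rw [hWlen]; exact t.isLt) (by rw [hWl]; exact hq)]
    rw [List.getElem_of_eq (hWget t), List.getElem_take, List.getElem_drop]
  have hPval : ∀ (t : Fin p.length) (q : ℕ) (hq : q < (p[(t : ℕ)]'t.isLt).length),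
      p.flatten[(W.take (t : ℕ)).flatten.length + q]'(by rw [← hL]; exact hfl t q hq)
        = (p[(t : ℕ)]'t.isLt)[q]'hq := by
    intro t q hq
    have e : (W.take (t : ℕ)).flatten.length + q = (p.take (t : ℕ)).flatten.length + q := by
      rw [hpre]
    simp only [e]
    exact flat_get p t q t.isLt hq
  have key : ∀ (s t : Fin p.length) (q r : ℕ) (hq : q < (p[(s : ℕ)]'s.isLt).length)
      (hr : r < (p[(t : ℕ)]'t.isLt).length),
      ((π[(o.1 s : ℕ)]'(o.1 s).isLt)[o.2 s + q]'(hbd s q hq)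
        < (π[(o.1 t : ℕ)]'(o.1 t).isLt)[o.2 t + r]'(hbd t r hr))
      ↔ ((p[(s : ℕ)]'s.isLt)[q]'hq < (p[(t : ℕ)]'t.isLt)[r]'hr) := by
    intro s t q r hq hr
    have H := hcmp ((W.take (s : ℕ)).flatten.length + q) ((W.take (t : ℕ)).flatten.length + r)
      (hfl s q hq) (hfl t r hr)
    rw [hWval s q hq, hWval t r hr, hPval s q hq, hPval t r hr] at H
    exact H
  -- now derive comparability of p[i], p[j]
  have hdisj : PCW.sb (p[(i : ℕ)]'i.isLt) (p[(j : ℕ)]'j.isLt)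
      ∨ PCW.sb (p[(j : ℕ)]'j.isLt) (p[(i : ℕ)]'i.isLt) := by
    rcases hcomp with hc | hc
    · left
      intro x hx y hy
      obtain ⟨q, hq, rfl⟩ := List.mem_iff_getElem.mp hx
      obtain ⟨r, hr, rfl⟩ := List.mem_iff_getElem.mp hy
      refine (key i j q r hq hr).mp ?_
      apply hc
      · simp only [hik]; exact List.getElem_mem _
      · simp only [hjk]; exact List.getElem_mem _
    · right
      intro x hx y hy
      obtain ⟨q, hq, rfl⟩ := List.mem_iff_getElem.mp hx
      obtain ⟨r, hr, rfl⟩ := List.mem_iff_getElem.mp hy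
      refine (key j i q r hq hr).mp ?_
      apply hc
      · simp only [hjk]; exact List.getElem_mem _
      · simp only [hik]; exact List.getElem_mem _
  -- chain' condition
  have hch := List.isChain_iff_getElem.mp hpconn (i : ℕ) (by omega)
  have hji' : (p[(i : ℕ) + 1]'(by omega)) = (p[(j : ℕ)]'j.isLt) := by
    congr 1
    omega
  rw [hji'] at hch
  have hne : (p[(i : ℕ)]'i.isLt) ≠ [] := (hpdec _ (List.getElem_mem _)).1
  obtain ⟨x, hx⟩ := List.exists_mem_of_ne_nil _ hne
  rcases hch with heq | ⟨h1, h2⟩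
  · rcases hdisj with hs | hs
    · exact lt_irrefl x (hs x hx x (heq ▸ hx))
    · exact lt_irrefl x (hs x (heq ▸ hx) x hx)
  · rcases hdisj with hs | hs
    · exact h1 hs
    · exact h2 hs

section Swap

variable (u v : List (List ℕ)) (a b : List ℕ)

lemma len_eq : (u ++ a :: b :: v).length = (u ++ b :: a :: v).length := by simp

lemma hk1 : u.length + 1 < (u ++ a :: b :: v).length := by simp

/-- The swapping map on positions. -/
def swF (x : Fin (u ++ a :: b :: v).length) : Fin (u ++ b :: a :: v).length :=
  ⟨sw u.length x, by
    have h1 := x.isLt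
    have h2 : u.length + 1 < (u ++ b :: a :: v).length := by simp
    have h3 : (x : ℕ) < (u ++ b :: a :: v).length := by simp at h1 ⊢; omega
    exact sw_lt h2 h3⟩

lemma get_swF (x : Fin (u ++ a :: b :: v).length) :
    (u ++ b :: a :: v).get (swF u v a b x) = (u ++ a :: b :: v).get x := by
  simp only [List.get_eq_getElem]
  exact get_sw u v a b x x.isLt _

lemma getA : (u ++ a :: b :: v)[u.length]'(by simp) = a := by
  rw [List.getElem_append_right le_rfl]
  simp

lemma getB : (u ++ a :: b :: v)[u.length + 1]'(by simp) = b := by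
  rw [List.getElem_append_right (by omega)]
  simp

lemma mem_swap (p : List (List ℕ)) (hne : a ≠ b) (hcomp : PCW.sb a b ∨ PCW.sb b a)
    (hpdec : ∀ τ ∈ p, PCW.IsBlock τ)
    (hpconn : p.Chain' fun a b => a = b ∨ (¬ PCW.sb a b ∧ ¬ PCW.sb b a))
    (o : (Fin p.length → Fin (u ++ a :: b :: v).length) × (Fin p.length → ℕ))
    (ho : o ∈ PCW.blockOccs p (u ++ a :: b :: v)) :
    ((fun i => swF u v a b (o.1 i), o.2) :
      (Fin p.length → Fin (u ++ b :: a :: v).length) × (Fin p.length → ℕ))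
      ∈ PCW.blockOccs p (u ++ b :: a :: v) := by
  have hcomp' : PCW.sb ((u ++ a :: b :: v)[u.length]'(by simp))
        ((u ++ a :: b :: v)[u.length + 1]'(by simp))
      ∨ PCW.sb ((u ++ a :: b :: v)[u.length + 1]'(by simp))
        ((u ++ a :: b :: v)[u.length]'(by simp)) := by
    rw [getA, getB]; exact hcomp
  obtain ⟨hmono, hlen, hiso⟩ := ho
  refine ⟨?_, ?_, ?_⟩
  · intro i j hij
    show (swF u v a b (o.1 i)) < (swF u v a b (o.1 j))
    rw [Fin.lt_def]
    apply sw_mono (hmono hij)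
    rintro ⟨h1, h2⟩
    exact not_both p _ hpdec hpconn o ⟨hmono, hlen, hiso⟩ u.length (hk1 u v a b) hcomp' i j h1 h2
  · intro i
    show o.2 i + (p.get i).length ≤ ((u ++ b :: a :: v).get (swF u v a b (o.1 i))).length
    rw [get_swF]
    exact hlen i
  · show PCW.OrdIso _ _
    simp only [get_swF]
    exact hiso

end Swap

lemma occ_adj (p π π' : List (List ℕ))
    (hpdec : ∀ τ ∈ p, PCW.IsBlock τ)
    (hpconn : p.Chain' fun a b => a = b ∨ (¬ PCW.sb a b ∧ ¬ PCW.sb b a))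
    (h : PCW.Adj π π') : PCW.occ p π = PCW.occ p π' := by
  cases h with
  | swap u v a b hne hcomp =>
    set F : ((Fin p.length → Fin (u ++ a :: b :: v).length) × (Fin p.length → ℕ)) →
        ((Fin p.length → Fin (u ++ b :: a :: v).length) × (Fin p.length → ℕ)) :=
      fun o => (fun i => swF u v a b (o.1 i), o.2) with hF
    set G : ((Fin p.length → Fin (u ++ b :: a :: v).length) × (Fin p.length → ℕ)) →
        ((Fin p.length → Fin (u ++ a :: b :: v).length) × (Fin p.length → ℕ)) :=
      fun o => (fun i => swF u v b a (o.1 i), o.2) with hG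
    have hGF : ∀ o, G (F o) = o := by
      intro o
      simp only [hF, hG]
      refine Prod.ext ?_ rfl
      funext i
      apply Fin.ext
      exact sw_sw _ _
    have hFG : ∀ o, F (G o) = o := by
      intro o
      simp only [hF, hG]
      refine Prod.ext ?_ rfl
      funext i
      apply Fin.ext
      exact sw_sw _ _
    have himg : PCW.blockOccs p (u ++ b :: a :: v) = F '' PCW.blockOccs p (u ++ a :: b :: v) := by
      ext o'
      constructor
      · intro h'
        exact ⟨G o', mem_swap u v b a p hne.symm hcomp.symm hpdec hpconn o' h', hFG o'⟩
      · rintro ⟨o, hoo, rfl⟩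
        exact mem_swap u v a b p hne hcomp hpdec hpconn o hoo
    have hinj : Function.Injective F := Function.LeftInverse.injective hGF
    unfold PCW.occ
    rw [himg, Set.ncard_image_of_injective _ hinj]

end Proofs

/-- If two words over `B` are equivalent in `L(B, ≪)`, then they have the same
number of occurrences of any piecewise decreasing and connected dashed
pattern. -/
theorem stmt_7 (π π' p : List (List ℕ))
    (hπ : ∀ D ∈ π, PCW.IsBlock D)
    (hpdec : ∀ τ ∈ p, PCW.IsBlock τ)
    (hpconn : p.Chain' fun a b => a = b ∨ (¬ PCW.sb a b ∧ ¬ PCW.sb b a))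
    (h : PCW.Equiv π π') :
    PCW.occ p π = PCW.occ p π' := by
  induction h with
  | refl => rfl
  | tail _ ha ih => rw [ih]; exact occ_adj p _ _ hpdec hpconn ha
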